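/- Let G be a locally compact abelian group, H ≤ G a subgroup, and A ⊆ H. Then A is a tile in H (with respect to a Haar measure on H) if and only if A is a tile in G, provided H is open in G. -/

import Mathlib

open Pointwise MeasureTheory

variable {G : Type*} [AddCommGroup G] [TopologicalSpace G] [IsTopologicalAddGroup G]
  [LocallyCompactSpace G] [SigmaCompactSpace G] [MeasurableSpace G] [BorelSpace G]

/-- `A` tiles the set `S` with respect to the measure `μ`: countably many translates
of `A` by elements of `S` cover `S` and distinct translates overlap in a null set. -/
def IsTileIn (μ : Measure G) (A S : Set G) : Prop :=
  ∃ ω : Set G, ω ⊆ S ∧ ω.Countable ∧ A + ω = S ∧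
    ∀ g ∈ ω, ∀ h ∈ ω, g ≠ h →
      μ (((fun a => a + g) '' A) ∩ ((fun a => a + h) '' A)) = 0

/-- Translation preserves a Haar measure on an abelian group. -/
lemma haar_image_add_right (μ : Measure G) [μ.IsAddHaarMeasure] (s : Set G) (t : G) :
    μ ((fun a => a + t) '' s) = μ s := by
  have : (fun a => a + t) '' s = (fun a => a + (-t)) ⁻¹' s := by
    ext x; simp [Set.mem_image, eq_comm, sub_eq_iff_eq_add]
  rw [this, measure_preimage_add_right]

/-- The quotient of a σ-compact group by an open subgroup is countable. -/
lemma countable_quotient_of_isOpen (H : AddSubgroup G) (hH : IsOpen (H : Set G)) :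
    Countable (G ⧸ H) := by
  have hmk : Function.Surjective (QuotientAddGroup.mk : G → G ⧸ H) :=
    Quotient.exists_rep
  have hfin : ∀ n : ℕ,
      ((QuotientAddGroup.mk : G → G ⧸ H) '' compactCovering G n).Finite := by
    intro n
    obtain ⟨t, ht⟩ := (isCompact_compactCovering G n).elim_finite_subcover
      (fun x : G => (fun y => x + y) '' (H : Set G))
      (fun x => (Homeomorph.addLeft x).isOpenMap _ hH)
      (by
        intro x _
        exact Set.mem_iUnion.2 ⟨x, ⟨0, H.zero_mem, by simp⟩⟩)
    apply Set.Finite.subset (t.finite_toSet.image (QuotientAddGroup.mk : G → G ⧸ H))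
    rintro q ⟨x, hx, rfl⟩
    obtain ⟨i, hi, hy⟩ := Set.mem_iUnion₂.1 (ht hx)
    obtain ⟨y, hyH, rfl⟩ := hy
    refine ⟨i, hi, ?_⟩
    have : -i + (i + y) ∈ H := by simpa using hyH
    exact ((QuotientAddGroup.eq).2 this).symm ▸ rfl
  have : (Set.univ : Set (G ⧸ H)).Countable := by
    have : (Set.univ : Set (G ⧸ H)) =
        ⋃ n, (QuotientAddGroup.mk : G → G ⧸ H) '' compactCovering G n := by
      apply Set.eq_of_subset_of_subset _ (Set.subset_univ _)
      intro q _
      obtain ⟨x, rfl⟩ := hmk q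
      obtain ⟨n, hn⟩ := Set.mem_iUnion.1 (iUnion_compactCovering G ▸ Set.mem_univ x)
      exact Set.mem_iUnion.2 ⟨n, ⟨x, hn, rfl⟩⟩
    rw [this]
    exact Set.countable_iUnion fun n => (hfin n).countable
  exact Set.countable_univ_iff.1 this

theorem tile_in_open_subgroup_iff_tile_in_group
    (μ : Measure G) [μ.IsAddHaarMeasure]
    (H : AddSubgroup G) (hH : IsOpen (H : Set G))
    (A : Set G) (hA : A ⊆ (H : Set G)) :
    IsTileIn μ A (H : Set G) ↔ IsTileIn μ A Set.univ := by
  constructor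
  · rintro ⟨ω, hωH, hωc, hcov, hdisj⟩
    have hQ : Countable (G ⧸ H) := countable_quotient_of_isOpen H hH
    set T : Set G := Set.range (Quotient.out : G ⧸ H → G) with hT
    have hTc : T.Countable := Set.countable_range _
    refine ⟨ω + T, Set.subset_univ _, by rw [← Set.image2_add]; exact hωc.image2 hTc _, ?_, ?_⟩
    · -- A + (ω + T) = univ
      rw [← add_assoc, hcov]
      apply Set.eq_of_subset_of_subset (Set.subset_univ _)
      intro x _
      set q : G ⧸ H := QuotientAddGroup.mk x with hq
      have hout : (QuotientAddGroup.mk q.out : G ⧸ H) = q := QuotientAddGroup.out_eq' q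
      have hxh : x - q.out ∈ H := by
        have : (QuotientAddGroup.mk (x : G) : G ⧸ H) = QuotientAddGroup.mk q.out := by
          rw [hout]
        have := (QuotientAddGroup.eq).1 this.symm
        simpa [neg_add_eq_sub] using this
      exact ⟨x - q.out, hxh, q.out, ⟨q, rfl⟩, sub_add_cancel x q.out⟩
    · -- disjointness
      rintro g ⟨w₁, hw₁, t₁, ⟨q₁, rfl⟩, rfl⟩ h ⟨w₂, hw₂, t₂, ⟨q₂, rfl⟩, rfl⟩ hne
      by_cases hcos : (w₁ + q₁.out) - (w₂ + q₂.out) ∈ H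
      · -- same coset: then q₁ = q₂ and w₁ ≠ w₂
        have ht12 : q₁.out - q₂.out ∈ H := by
          have hw : w₁ - w₂ ∈ H := H.sub_mem (hωH hw₁) (hωH hw₂)
          have : (w₁ + q₁.out - (w₂ + q₂.out)) - (w₁ - w₂) ∈ H := H.sub_mem hcos hw
          convert this using 1; abel
        have hq12 : q₁ = q₂ := by
          have : (QuotientAddGroup.mk q₁.out : G ⧸ H) = QuotientAddGroup.mk q₂.out :=
            (QuotientAddGroup.eq).2 (by simpa [neg_add_eq_sub] using H.neg_mem ht12)
          rwa [QuotientAddGroup.out_eq', QuotientAddGroup.out_eq'] at this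
        subst hq12
        have hwne : w₁ ≠ w₂ := fun hcon => hne (by rw [hcon])
        have key : ((fun a => a + (w₁ + q₁.out)) '' A) ∩ ((fun a => a + (w₂ + q₁.out)) '' A)
            = (fun a => a + q₁.out) ''
              (((fun a => a + w₁) '' A) ∩ ((fun a => a + w₂) '' A)) := by
          rw [Set.image_inter (add_left_injective q₁.out), Set.image_image,
            Set.image_image]
          simp only [add_assoc]
        rw [key, haar_image_add_right]
        exact hdisj w₁ hw₁ w₂ hw₂ hwne
      · -- different cosets: the translates are disjoint
        have : ((fun a => a + (w₁ + q₁.out)) '' A) ∩ ((fun a => a + (w₂ + q₂.out)) '' A)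
            = ∅ := by
          ext x
          simp only [Set.mem_inter_iff, Set.mem_image, Set.mem_empty_iff_false, iff_false]
          rintro ⟨⟨a, ha, rfl⟩, b, hb, hab⟩
          apply hcos
          have h1 : (w₁ + q₁.out) - (w₂ + q₂.out) = b - a := by
            rw [sub_eq_sub_iff_add_eq_add, add_comm]
            exact hab.symm
          rw [h1]
          exact H.sub_mem (hA hb) (hA ha)
        rw [this]; simp
  · rintro ⟨ω, _, hωc, hcov, hdisj⟩
    refine ⟨ω ∩ (H : Set G), Set.inter_subset_right, hωc.mono Set.inter_subset_left, ?_, ?_⟩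
    · apply Set.eq_of_subset_of_subset
      · rintro x ⟨a, ha, g, ⟨_, hgH⟩, rfl⟩
        exact H.add_mem (hA ha) hgH
      · intro x hx
        have : x ∈ A + ω := by rw [hcov]; trivial
        obtain ⟨a, ha, g, hg, rfl⟩ := this
        have hgH : g ∈ H := by
          have : (a + g) - a ∈ H := H.sub_mem hx (hA ha)
          simpa using this
        exact ⟨a, ha, g, ⟨hg, hgH⟩, rfl⟩
    · intro g hg h hh hne
      exact hdisj g hg.1 h hh.1 hne
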